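/- Let q be a prime power, η ≥ 1 an integer, and let U_{q+1} be the subgroup of F_{q^2}^* of order q+1. If η+1 divides q+1, then there exist η+1 pairwise distinct elements u_1, …, u_{η+1} ∈ U_{q+1} such that both the first and the η-th elementary symmetric polynomials vanish: σ_{η+1,1}(u_1,…,u_{η+1}) = 0 and σ_{η+1,η}(u_1,…,u_{η+1}) = 0. -/

import Mathlib

open Finset

/-- If `η + 1` divides `q + 1`, then there are `η + 1` pairwise distinct
elements of the subgroup `U_{q+1}` of `F_{q²}^*` on which both the first and
the `η`-th elementary symmetric polynomials vanish. -/
theorem esymm_vanishing_elements (p e : ℕ) (hp : p.Prime) (he : 1 ≤ e)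
    (q : ℕ) (hq : q = p ^ e) {F : Type*} [Field F] [Fintype F]
    (hcard : Fintype.card F = q ^ 2) (η : ℕ) (hη : 1 ≤ η)
    (hdvd : (η + 1) ∣ (q + 1)) :
    ∃ u : Fin (η + 1) → F, Function.Injective u ∧
      (∀ i, (u i) ^ (q + 1) = 1) ∧
      (∑ i, u i) = 0 ∧
      (∑ S ∈ (Finset.univ : Finset (Fin (η + 1))).powersetCard η, ∏ j ∈ S, u j) = 0 := by
  have hq2 : 2 ≤ q := by
    rw [hq]
    calc 2 ≤ p := hp.two_le
    _ ≤ p ^ e := Nat.le_self_pow (by omega) p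
  have hq4 : 4 ≤ q ^ 2 := by nlinarith
  have hcardU : Nat.card Fˣ = q ^ 2 - 1 := by
    rw [Nat.card_units, Nat.card_eq_fintype_card, hcard]
  have hfac : q ^ 2 - 1 = (q + 1) * (q - 1) := by
    have h1 : 1 ≤ q := by omega
    have h2 : 1 ≤ q ^ 2 := by omega
    zify [h1, h2]; ring
  have hdvd2 : (η + 1) ∣ Nat.card Fˣ := by
    rw [hcardU, hfac]
    exact hdvd.trans ⟨q - 1, rfl⟩
  -- get ζ of order η+1 in Fˣ
  obtain ⟨g, hg⟩ := IsCyclic.exists_ofOrder_eq_natCard (α := Fˣ)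
  have hgo : orderOf g ≠ 0 := by rw [hg, hcardU]; omega
  have hdvdg : (η + 1) ∣ orderOf g := by rw [hg]; exact hdvd2
  set ζ : Fˣ := g ^ (orderOf g / (η + 1)) with hζ
  have hζord : orderOf ζ = η + 1 := orderOf_pow_orderOf_div hgo hdvdg
  set x : F := (ζ : F) with hx
  have hxn : x ^ (η + 1) = 1 := by
    have h1 : ζ ^ (η + 1) = 1 := by rw [← hζord, pow_orderOf_eq_one]
    have := congrArg Units.val h1
    simpa [hx] using this
  have hx1 : x ≠ 1 := by
    intro h
    have : ζ = 1 := Units.ext h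
    rw [this, orderOf_one] at hζord; omega
  have hx0 : x ≠ 0 := Units.ne_zero ζ
  refine ⟨fun i => x ^ (i : ℕ), ?_, ?_, ?_, ?_⟩
  · -- injective
    intro i j hij
    have h1 : (ζ : Fˣ) ^ (i : ℕ) = ζ ^ (j : ℕ) := Units.ext (by push_cast; exact hij)
    have := pow_injOn_Iio_orderOf (x := ζ) (by simp [hζord, i.isLt]) (by simp [hζord, j.isLt]) h1
    exact Fin.ext this
  · intro i
    obtain ⟨k, hk⟩ := hdvd
    rw [← pow_mul, mul_comm, pow_mul, hk, pow_mul, hxn, one_pow, one_pow]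
  · rw [Fin.sum_univ_eq_sum_range (fun i => x ^ i) (η + 1), geom_sum_eq hx1, hxn,
      sub_self, zero_div]
  · -- σ_η = 0
    have hsd : ∀ i : Fin (η + 1),
        (Finset.univ : Finset (Fin (η + 1))) \ Finset.univ.erase i = {i} :=
      fun i => Finset.sdiff_erase_self (Finset.mem_univ i)
    have hmin : ∀ (i : Fin (η + 1)) (h : ((Finset.univ : Finset (Fin (η + 1))) \
        Finset.univ.erase i).Nonempty),
        ((Finset.univ : Finset (Fin (η + 1))) \ Finset.univ.erase i).min' h = i := by
      intro i h
      simp only [hsd i]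
      exact Finset.min'_singleton i
    have key : ∀ S ∈ (Finset.univ : Finset (Fin (η + 1))).powersetCard η,
        ∃ i : Fin (η + 1), S = Finset.univ.erase i := by
      intro S hS
      rw [Finset.mem_powersetCard] at hS
      have hScompl : Sᶜ.card = 1 := by
        rw [Finset.card_compl, hS.2]; simp
      obtain ⟨i, hi⟩ := Finset.card_eq_one.mp hScompl
      refine ⟨i, ?_⟩
      rw [← Finset.compl_singleton, ← hi, compl_compl]
    have hbij : ∑ S ∈ (Finset.univ : Finset (Fin (η + 1))).powersetCard η, ∏ j ∈ S, x ^ (j : ℕ)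
        = ∑ i : Fin (η + 1), ∏ j ∈ Finset.univ.erase i, x ^ (j : ℕ) := by
      refine Finset.sum_bij' (fun S hS => (Finset.univ \ S).min' ?_)
        (fun i _ => Finset.univ.erase i) ?_ ?_ ?_ ?_ ?_
      · obtain ⟨i, hi⟩ := key S hS
        rw [hi]
        exact ⟨i, by simp [hsd i]⟩
      · intro S hS; exact Finset.mem_univ _
      · intro i _
        rw [Finset.mem_powersetCard]
        refine ⟨Finset.subset_univ _, ?_⟩
        rw [Finset.card_erase_of_mem (Finset.mem_univ i)]; simp
      · intro S hS
        obtain ⟨i, hi⟩ := key S hS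
        subst hi
        simp only [hmin]
      · intro i _
        simp only [hmin]
      · intro S hS
        obtain ⟨i, hi⟩ := key S hS
        subst hi
        simp only [hmin]
    rw [hbij]
    have herase : ∀ i : Fin (η + 1), ∏ j ∈ Finset.univ.erase i, x ^ (j : ℕ)
        = (∏ j : Fin (η + 1), x ^ (j : ℕ)) * ((x⁻¹) ^ (i : ℕ)) := by
      intro i
      rw [← Finset.prod_erase_mul Finset.univ _ (Finset.mem_univ i), inv_pow]
      field_simp
    simp_rw [herase]
    rw [← Finset.mul_sum]
    have hxinv1 : x⁻¹ ≠ 1 := by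
      intro h; exact hx1 (by rw [← inv_inv x, h, inv_one])
    have hsum : ∑ i : Fin (η + 1), (x⁻¹) ^ (i : ℕ) = 0 := by
      rw [Fin.sum_univ_eq_sum_range (fun i => (x⁻¹) ^ i) (η + 1), geom_sum_eq hxinv1,
        inv_pow, hxn, inv_one, sub_self, zero_div]
    rw [hsum, mul_zero]
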